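/- Assume ζ(c) < 0 for all c ∈ [0,1). Then for every c ∈ [0,1), γ(c) > x̃(c), where x̃(c) := (1 − c)θμ/ζ(c); consequently, for every x ≥ γ(c) one has (1 − c)(θμ − (λ + θ)x) ≥ −λΦ(c)x, i.e. the function (x, c) ↦ x(1 − c) satisfies the Hamilton–Jacobi–Bellman differential inequality on the region x ≥ γ(c). -/

import Mathlib

open MeasureTheory Real Set Filter Topology

section Aux

private lemma OU_integrable (s a c : ℝ) (hs : -1 < s) :
    IntegrableOn (fun t : ℝ => t ^ s * Real.exp (-t ^ 2 / 2 + a * t * c)) (Set.Ioi 0) := by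
  have key : IntegrableOn
      (fun t : ℝ => Real.exp ((a*c)^2) * (t ^ s * Real.exp (-(1/4) * t ^ 2))) (Set.Ioi 0) :=
    (integrableOn_rpow_mul_exp_neg_mul_sq (by norm_num) hs).const_mul _
  refine key.mono' ?_ ?_
  · apply ContinuousOn.aestronglyMeasurable ?_ measurableSet_Ioi
    exact ContinuousOn.mul
      (fun t ht => (Real.continuousAt_rpow_const t s (Or.inl (ne_of_gt ht))).continuousWithinAt)
      (Continuous.continuousOn (by fun_prop))
  · filter_upwards [ae_restrict_mem measurableSet_Ioi] with t ht
    have ht' : (0:ℝ) < t := ht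
    rw [Real.norm_eq_abs, abs_of_nonneg (by positivity)]
    have h1 : Real.exp (-t ^ 2 / 2 + a * t * c)
        ≤ Real.exp ((a*c)^2) * Real.exp (-(1/4) * t ^ 2) := by
      rw [← Real.exp_add]
      apply Real.exp_le_exp.mpr
      nlinarith [sq_nonneg (a*c - t/2)]
    calc t ^ s * Real.exp (-t ^ 2 / 2 + a * t * c)
        ≤ t ^ s * (Real.exp ((a*c)^2) * Real.exp (-(1/4) * t ^ 2)) :=
          mul_le_mul_of_nonneg_left h1 (by positivity)
      _ = Real.exp ((a*c)^2) * (t ^ s * Real.exp (-(1/4) * t ^ 2)) := by ring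

private lemma OU_integral_pos (s a c : ℝ) (hs : -1 < s) :
    0 < ∫ t in Set.Ioi (0:ℝ), t ^ s * Real.exp (-t ^ 2 / 2 + a * t * c) := by
  rw [setIntegral_pos_iff_support_of_nonneg_ae ?_ (OU_integrable s a c hs)]
  · have hsub : Set.Ioi (0:ℝ) ⊆
        Function.support fun t : ℝ => t ^ s * Real.exp (-t ^ 2 / 2 + a * t * c) := by
      intro t ht
      have ht' : (0:ℝ) < t := ht
      have hpos : (0:ℝ) < t ^ s * Real.exp (-t ^ 2 / 2 + a * t * c) := by positivity
      exact hpos.ne'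
    calc (0:ENNReal) < volume (Set.Ioi (0:ℝ)) := by simp [Real.volume_Ioi]
      _ ≤ _ := measure_mono (Set.subset_inter hsub Set.Subset.rfl)
  · filter_upwards [ae_restrict_mem measurableSet_Ioi] with t ht
    have ht' : (0:ℝ) < t := ht
    positivity

private lemma OU_cont (s a c : ℝ) :
    ContinuousOn (fun t : ℝ => t ^ s * Real.exp (-t ^ 2 / 2 + a * t * c)) (Set.Ioi 0) :=
  ContinuousOn.mul
    (fun t ht => (Real.continuousAt_rpow_const t s (Or.inl (ne_of_gt ht))).continuousWithinAt)
    (Continuous.continuousOn (by fun_prop))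

private lemma OU_ibp (q a c : ℝ) (hq : 0 < q) :
    (∫ t in Set.Ioi (0:ℝ), t ^ (q+1) * Real.exp (-t ^ 2 / 2 + a * t * c))
      = q * (∫ t in Set.Ioi (0:ℝ), t ^ (q-1) * Real.exp (-t ^ 2 / 2 + a * t * c))
        + a * c * ∫ t in Set.Ioi (0:ℝ), t ^ q * Real.exp (-t ^ 2 / 2 + a * t * c) := by
  set f : ℝ → ℝ := fun t => t ^ q * Real.exp (-t ^ 2 / 2 + a * t * c) with hf_def
  set f' : ℝ → ℝ := fun t =>
    q * (t ^ (q-1) * Real.exp (-t ^ 2 / 2 + a * t * c))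
      + a * c * (t ^ q * Real.exp (-t ^ 2 / 2 + a * t * c))
      - t ^ (q+1) * Real.exp (-t ^ 2 / 2 + a * t * c) with hf'_def
  have hderiv : ∀ t ∈ Set.Ioi (0:ℝ), HasDerivAt f (f' t) t := by
    intro t ht
    have ht' : (0:ℝ) < t := ht
    have hE : HasDerivAt (fun t : ℝ => -t ^ 2 / 2 + a * t * c) (a * c - t) t := by
      have h1 : HasDerivAt (fun t : ℝ => a * t * c) (a * c) t := by
        simpa using ((hasDerivAt_id t).const_mul a).mul_const c
      have h2 : HasDerivAt (fun t : ℝ => -t ^ 2 / 2) (-t) t := by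
        have := ((hasDerivAt_pow 2 t).neg).div_const 2
        simpa using this.congr_deriv (by ring)
      exact (h2.add h1).congr_deriv (by ring)
    have hpow : HasDerivAt (fun t : ℝ => t ^ q) (q * t ^ (q-1)) t :=
      Real.hasDerivAt_rpow_const (Or.inl (ne_of_gt ht'))
    have := hpow.mul hE.exp
    apply this.congr_deriv
    simp only [hf'_def]
    rw [Real.rpow_add_one (ne_of_gt ht')]
    ring
  have hint : IntegrableOn f' (Set.Ioi 0) := by
    apply Integrable.sub
    apply Integrable.add
    · exact (OU_integrable (q-1) a c (by linarith)).const_mul q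
    · exact (OU_integrable q a c (by linarith)).const_mul (a*c)
    · exact OU_integrable (q+1) a c (by linarith)
  have hcont : ContinuousWithinAt f (Set.Ici 0) 0 := by
    apply ContinuousAt.continuousWithinAt
    exact ((Real.continuousAt_rpow_const 0 q (Or.inr (le_of_lt hq))).mul
      (Real.continuous_exp.comp (by fun_prop)).continuousAt)
  have htend : Tendsto f atTop (𝓝 0) := by
    apply tendsto_of_tendsto_of_tendsto_of_le_of_le'
      (tendsto_const_nhds (x := (0:ℝ)))
      (tendsto_rpow_mul_exp_neg_mul_atTop_nhds_zero q 1 one_pos)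
    · filter_upwards [eventually_gt_atTop (0:ℝ)] with t ht
      positivity
    · filter_upwards [eventually_gt_atTop (0:ℝ), eventually_ge_atTop (2*(a*c)+2)] with t ht1 ht2
      have : Real.exp (-t ^ 2 / 2 + a * t * c) ≤ Real.exp (-1 * t) := by
        apply Real.exp_le_exp.mpr
        nlinarith
      exact mul_le_mul_of_nonneg_left this (by positivity)
  have h0 : (∫ t in Set.Ioi (0:ℝ), f' t) = 0 - f 0 :=
    integral_Ioi_of_hasDerivAt_of_tendsto hcont hderiv hint htend
  have hf0 : f 0 = 0 := by
    simp [hf_def, Real.zero_rpow (ne_of_gt hq)]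
  rw [hf0, sub_zero] at h0
  have hsplit : (∫ t in Set.Ioi (0:ℝ), f' t)
      = q * (∫ t in Set.Ioi (0:ℝ), t ^ (q-1) * Real.exp (-t ^ 2 / 2 + a * t * c))
        + a * c * (∫ t in Set.Ioi (0:ℝ), t ^ q * Real.exp (-t ^ 2 / 2 + a * t * c))
        - ∫ t in Set.Ioi (0:ℝ), t ^ (q+1) * Real.exp (-t ^ 2 / 2 + a * t * c) := by
    rw [integral_sub (by
        exact Integrable.add ((OU_integrable (q-1) a c (by linarith)).const_mul q)
          ((OU_integrable q a c (by linarith)).const_mul (a*c)))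
      (OU_integrable (q+1) a c (by linarith)),
      integral_add ((OU_integrable (q-1) a c (by linarith)).const_mul q)
        ((OU_integrable q a c (by linarith)).const_mul (a*c)),
      integral_const_mul, integral_const_mul]
  rw [hsplit] at h0
  linarith

end Aux

/-- The (positive multiple of the) strictly increasing fundamental solution `ψ_λ` of the
Ornstein–Uhlenbeck equation `(1/2)σ² f'' + θ(μ - x) f' = λ f`, written as the integral
`ψ(x) = ∫₀^∞ t^(λ/θ - 1) exp(-t²/2 + a t (x - μ)) dt` with `a = √(2θ)/σ`. -/
noncomputable def OUpsi (lam th mu sig : ℝ) (x : ℝ) : ℝ :=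
  ∫ t in Set.Ioi (0:ℝ),
    t ^ (lam / th - 1) * Real.exp (-t ^ 2 / 2 + Real.sqrt (2 * th) / sig * t * (x - mu))

private lemma OU_hasDerivAt (lam th mu sig : ℝ) (hlam : 0 < lam) (hth : 0 < th)
    (hsig : 0 < sig) (x : ℝ) :
    HasDerivAt (OUpsi lam th mu sig)
      (Real.sqrt (2 * th) / sig * ∫ t in Set.Ioi (0:ℝ),
        t ^ (lam / th) * Real.exp (-t ^ 2 / 2 + Real.sqrt (2 * th) / sig * t * (x - mu))) x := by
  set a : ℝ := Real.sqrt (2 * th) / sig with ha_def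
  have ha : 0 < a := div_pos (Real.sqrt_pos.mpr (by linarith)) hsig
  set p : ℝ := lam / th - 1 with hp_def
  have hp : -1 < p := by
    have : 0 < lam / th := div_pos hlam hth
    simp only [hp_def]; linarith
  have key := hasDerivAt_integral_of_dominated_loc_of_deriv_le (μ := volume.restrict (Set.Ioi 0))
    (F := fun (x : ℝ) (t : ℝ) => t ^ p * Real.exp (-t ^ 2 / 2 + a * t * (x - mu)))
    (F' := fun (x : ℝ) (t : ℝ) => a * (t ^ (p+1) * Real.exp (-t ^ 2 / 2 + a * t * (x - mu))))
    (x₀ := x) (bound := fun t => a * (t ^ (p+1) * Real.exp (-t ^ 2 / 2 + a * t * (|x - mu| + 1))))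
    (Metric.ball_mem_nhds x one_pos)
    (Filter.Eventually.of_forall fun y =>
      (OU_cont p a (y - mu)).aestronglyMeasurable measurableSet_Ioi)
    (OU_integrable p a (x - mu) hp)
    (((OU_integrable (p+1) a (x - mu) (by linarith)).aestronglyMeasurable).const_mul a)
    ?_ (((OU_integrable (p+1) a (|x - mu| + 1) (by linarith)).const_mul a)) ?_
  · have h2 := key.2
    have : (∫ t in Set.Ioi (0:ℝ), a * (t ^ (p+1) * Real.exp (-t ^ 2 / 2 + a * t * (x - mu))))
        = a * ∫ t in Set.Ioi (0:ℝ), t ^ (p+1) * Real.exp (-t ^ 2 / 2 + a * t * (x - mu)) :=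
      integral_const_mul a _
    rw [this] at h2
    have hp1 : p + 1 = lam / th := by simp [hp_def]
    rw [hp1] at h2
    exact h2
  · filter_upwards [ae_restrict_mem measurableSet_Ioi] with t ht
    intro y hy
    have ht' : (0:ℝ) < t := ht
    rw [Real.norm_eq_abs, abs_of_nonneg (by positivity)]
    have hyb : y - mu ≤ |x - mu| + 1 := by
      have h1 : |y - x| < 1 := by simpa [Real.dist_eq] using (mem_ball_iff_norm.mp hy)
      have := abs_le.mp (le_of_lt h1)
      have := le_abs_self (x - mu)
      linarith
    have hexp : Real.exp (-t ^ 2 / 2 + a * t * (y - mu))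
        ≤ Real.exp (-t ^ 2 / 2 + a * t * (|x - mu| + 1)) := by
      apply Real.exp_le_exp.mpr
      nlinarith [mul_nonneg (le_of_lt ha) (le_of_lt ht')]
    exact mul_le_mul_of_nonneg_left
      (mul_le_mul_of_nonneg_left hexp (by positivity)) (le_of_lt ha)
  · filter_upwards [ae_restrict_mem measurableSet_Ioi] with t ht
    intro y hy
    have ht' : (0:ℝ) < t := ht
    have hE : HasDerivAt (fun y : ℝ => -t ^ 2 / 2 + a * t * (y - mu)) (a * t) y := by
      have h1 : HasDerivAt (fun y : ℝ => a * t * (y - mu)) (a * t) y := by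
        simpa using ((hasDerivAt_id y).sub_const mu).const_mul (a * t)
      simpa using h1.const_add (-t ^ 2 / 2)
    have h2 := (hE.exp).const_mul (t ^ p)
    refine h2.congr_deriv ?_
    rw [Real.rpow_add_one (ne_of_gt ht')]
    ring

/-- `ζ(c) = (λ+θ)(1-c) - λΦ(c)`. -/
noncomputable def zetafun (lam th : ℝ) (Phi : ℝ → ℝ) (c : ℝ) : ℝ :=
  (lam + th) * (1 - c) - lam * Phi c

/-- `x̄₀(c) = θμΦ(c)/ζ(c)`. -/
noncomputable def xbar0fun (lam th mu : ℝ) (Phi : ℝ → ℝ) (c : ℝ) : ℝ :=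
  th * mu * Phi c / zetafun lam th Phi c

/-- assume `ζ < 0` on `[0,1)`. Then for every `c ∈ [0,1)`,
`γ(c) > x̃(c) := (1-c)θμ/ζ(c)`; consequently for every `x ≥ γ(c)` one has
`(1-c)(θμ - (λ+θ)x) ≥ -λΦ(c)x` (the HJB inequality for `(x,c) ↦ x(1-c)` on `x ≥ γ(c)`). -/
theorem statement15 (lam th mu sig : ℝ)
    (hlam : 0 < lam) (hth : 0 < th) (hmu : 0 < mu) (hsig : 0 < sig)
    (Phi : ℝ → ℝ) (hPhiC2 : ContDiff ℝ 2 Phi)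
    (hPhiconv : StrictConvexOn ℝ Set.univ Phi)
    (hPhi' : ∀ c ∈ Set.Icc (0:ℝ) 1, deriv Phi c < 0) (hPhi1 : Phi 1 = 0)
    (hzeta : ∀ c ∈ Set.Ico (0:ℝ) 1, zetafun lam th Phi c < 0)
    (gamma : ℝ → ℝ)
    (hgamma : ∀ c ∈ Set.Ico (0:ℝ) 1,
      OUpsi lam th mu sig (gamma c)
        = deriv (OUpsi lam th mu sig) (gamma c) * (gamma c - xbar0fun lam th mu Phi c) ∧
      xbar0fun lam th mu Phi c < gamma c ∧
      ∀ y : ℝ, OUpsi lam th mu sig y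
        = deriv (OUpsi lam th mu sig) y * (y - xbar0fun lam th mu Phi c) → y = gamma c)
    :
    ∀ c ∈ Set.Ico (0:ℝ) 1,
      (1 - c) * th * mu / zetafun lam th Phi c < gamma c ∧
      ∀ x : ℝ, gamma c ≤ x →
        -(lam * Phi c * x) ≤ (1 - c) * (th * mu - (lam + th) * x) := by
  intro c hc
  obtain ⟨heq, -, -⟩ := hgamma c hc
  have hZ : zetafun lam th Phi c < 0 := hzeta c hc
  have hZ0 : zetafun lam th Phi c ≠ 0 := ne_of_lt hZ
  have hq : 0 < lam / th := div_pos hlam hth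
  set a : ℝ := Real.sqrt (2 * th) / sig with ha_def
  have ha : 0 < a := div_pos (Real.sqrt_pos.mpr (by linarith)) hsig
  set g : ℝ := gamma c with hg_def
  set B : ℝ := xbar0fun lam th mu Phi c with hB_def
  set xt : ℝ := (1 - c) * th * mu / zetafun lam th Phi c with hxt_def
  -- the three integrals
  set J1 : ℝ := ∫ t in Set.Ioi (0:ℝ),
    t ^ (lam / th - 1) * Real.exp (-t ^ 2 / 2 + a * t * (g - mu)) with hJ1_def
  set J2 : ℝ := ∫ t in Set.Ioi (0:ℝ),
    t ^ (lam / th) * Real.exp (-t ^ 2 / 2 + a * t * (g - mu)) with hJ2_def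
  set J3 : ℝ := ∫ t in Set.Ioi (0:ℝ),
    t ^ (lam / th + 1) * Real.exp (-t ^ 2 / 2 + a * t * (g - mu)) with hJ3_def
  have hpsi : OUpsi lam th mu sig g = J1 := rfl
  have hder : deriv (OUpsi lam th mu sig) g = a * J2 :=
    (OU_hasDerivAt lam th mu sig hlam hth hsig g).deriv
  have hibp : J3 = (lam / th) * J1 + a * (g - mu) * J2 := OU_ibp (lam / th) a (g - mu) hq
  have hJ2pos : 0 < J2 := OU_integral_pos (lam / th) a (g - mu) (by linarith)
  have hJ3pos : 0 < J3 := OU_integral_pos (lam / th + 1) a (g - mu) (by linarith)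
  rw [hpsi, hder] at heq
  -- heq : J1 = a * J2 * (g - B)
  have hxtB : lam * B + th * mu = (lam + th) * xt := by
    have hZ0' : (lam + th) * (1 - c) - lam * Phi c ≠ 0 := hZ0
    simp only [hB_def, hxt_def, xbar0fun, zetafun] at *
    field_simp
    ring
  have h3 : th * J3 = lam * J1 + th * (a * (g - mu)) * J2 := by
    rw [hibp]
    field_simp
  rw [heq] at h3
  have hfinal : th * J3 = a * J2 * ((lam + th) * (g - xt)) := by
    rw [h3]
    linear_combination (-(a * J2)) * hxtB
  have hmain : xt < g := by
    by_contra hcon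
    push_neg at hcon
    have h4 : a * J2 * ((lam + th) * (g - xt)) ≤ 0 :=
      mul_nonpos_of_nonneg_of_nonpos (by positivity)
        (mul_nonpos_of_nonneg_of_nonpos (by linarith) (by linarith))
    nlinarith [mul_pos hth hJ3pos]
  refine ⟨hmain, fun x hx => ?_⟩
  have hZxt : zetafun lam th Phi c * xt = (1 - c) * th * mu := by
    rw [hxt_def]
    field_simp
  have h5 : zetafun lam th Phi c * x < zetafun lam th Phi c * xt :=
    mul_lt_mul_of_neg_left (lt_of_lt_of_le hmain hx) hZ
  have hZdef : zetafun lam th Phi c = (lam + th) * (1 - c) - lam * Phi c := rfl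
  have h6 : zetafun lam th Phi c * x = ((lam + th) * (1 - c) - lam * Phi c) * x := by
    rw [← hZdef]
  nlinarith [h5, hZxt, h6]
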